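/- For all n ≥ 1, ∑_{σ ∈ S_{n+1}, σ(n+1)=1} q^{cr(σ)} = F_n(q) and ∑_{σ ∈ S_{n+1}, σ(n)=1} q^{cr(σ)} = q·F_n(q) + (1−q)·F_{n−1}(q), where F_m(q) = ∑_{σ ∈ S_m} q^{cr(σ)}. -/

import Mathlib

open Finset Polynomial

/-- A crossing of a permutation of [n] (0-based encoding of the 1-based definition):
`i < j < σ(i) < σ(j)` or `σ(i) < σ(j) ≤ i < j` (1-based). -/
def IsCross {n : ℕ} (σ : Equiv.Perm (Fin n)) (i j : Fin n) : Prop :=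
  (i < j ∧ (j : ℕ) < (σ i : ℕ) ∧ σ i < σ j) ∨
  (σ i < σ j ∧ (σ j : ℕ) ≤ (i : ℕ) ∧ i < j)

instance {n : ℕ} (σ : Equiv.Perm (Fin n)) (i j : Fin n) : Decidable (IsCross σ i j) := by
  unfold IsCross; infer_instance

/-- the number of crossings -/
def cr {n : ℕ} (σ : Equiv.Perm (Fin n)) : ℕ :=
  (Finset.univ.filter (fun p : Fin n × Fin n => IsCross σ p.1 p.2)).card

/-- occurrence of a length-3 pattern -/
def Contains3 {n : ℕ} (σ : Equiv.Perm (Fin n)) (τ : Fin 3 → Fin 3) : Prop :=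
  ∃ i j l : Fin n, i < j ∧ j < l ∧
    (τ 0 < τ 1 ↔ σ i < σ j) ∧ (τ 0 < τ 2 ↔ σ i < σ l) ∧ (τ 1 < τ 2 ↔ σ j < σ l)

instance {n : ℕ} (σ : Equiv.Perm (Fin n)) (τ : Fin 3 → Fin 3) :
    Decidable (Contains3 σ τ) := by
  unfold Contains3; infer_instance

def Avoids {n : ℕ} (σ : Equiv.Perm (Fin n)) (τ : Fin 3 → Fin 3) : Prop := ¬ Contains3 σ τ

instance {n : ℕ} (σ : Equiv.Perm (Fin n)) (τ : Fin 3 → Fin 3) : Decidable (Avoids σ τ) := by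
  unfold Avoids; infer_instance

def p123 : Fin 3 → Fin 3 := ![0, 1, 2]
def p132 : Fin 3 → Fin 3 := ![0, 2, 1]
def p213 : Fin 3 → Fin 3 := ![1, 0, 2]
def p231 : Fin 3 → Fin 3 := ![1, 2, 0]
def p312 : Fin 3 → Fin 3 := ![2, 0, 1]
def p321 : Fin 3 → Fin 3 := ![2, 1, 0]

/-- extend by a fixed point at the end -/
def extFix {n : ℕ} (τ : Equiv.Perm (Fin n)) : Equiv.Perm (Fin (n + 1)) :=
  Equiv.permCongr finSuccEquivLast.symm (Equiv.optionCongr τ)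

@[simp] lemma extFix_castSucc {n : ℕ} (τ : Equiv.Perm (Fin n)) (i : Fin n) :
    extFix τ i.castSucc = (τ i).castSucc := by
  simp [extFix, Equiv.permCongr_apply, finSuccEquivLast_castSucc, finSuccEquivLast_symm_some]

@[simp] lemma extFix_last {n : ℕ} (τ : Equiv.Perm (Fin n)) :
    extFix τ (Fin.last n) = Fin.last n := by
  simp [extFix, Equiv.permCongr_apply, finSuccEquivLast_last]

def ext1 {n : ℕ} (τ : Equiv.Perm (Fin n)) : Equiv.Perm (Fin (n + 1)) :=
  (finRotate (n + 1)) * extFix τ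

@[simp] lemma ext1_castSucc {n : ℕ} (τ : Equiv.Perm (Fin n)) (i : Fin n) :
    ext1 τ i.castSucc = (τ i).succ := by
  simp [ext1, Equiv.Perm.mul_apply, finRotate_succ_apply, Fin.coeSucc_eq_succ]

@[simp] lemma ext1_last {n : ℕ} (τ : Equiv.Perm (Fin n)) :
    ext1 τ (Fin.last n) = 0 := by
  simp [ext1, Equiv.Perm.mul_apply, finRotate_succ_apply, Fin.last_add_one]

lemma ext1_apply_of_lt {n : ℕ} (τ : Equiv.Perm (Fin n)) {x : Fin (n + 1)}
    (hx : (x : ℕ) < n) : ext1 τ x = (τ ⟨x, hx⟩).succ := by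
  obtain ⟨i, rfl⟩ : ∃ i : Fin n, x = i.castSucc := ⟨⟨x, hx⟩, by ext; simp⟩
  rw [ext1_castSucc]
  congr 1

lemma cross_ext1_bounds {n : ℕ} (τ : Equiv.Perm (Fin n)) {p q : Fin (n + 1)}
    (h : IsCross (ext1 τ) p q) : (p : ℕ) < n ∧ (q : ℕ) < n := by
  have hq : (q : ℕ) < n := by
    by_contra hq
    have : q = Fin.last n := by ext; have := q.isLt; simp; omega
    subst this
    rw [IsCross, ext1_last] at h
    rcases h with ⟨_, _, h⟩ | ⟨h, _, _⟩ <;> exact absurd h (Fin.not_lt_zero _)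
  have hpq : p < q := h.elim (fun h => h.1) (fun h => h.2.2)
  exact ⟨lt_trans hpq (by exact hq), hq⟩

lemma cr_ext1 {n : ℕ} (τ : Equiv.Perm (Fin n)) : cr (ext1 τ) = cr τ⁻¹ := by
  unfold cr
  refine Finset.card_bij'
    (fun p hp => ((τ ⟨p.1, (cross_ext1_bounds τ (Finset.mem_filter.mp hp).2).1⟩ : Fin n),
      (τ ⟨p.2, (cross_ext1_bounds τ (Finset.mem_filter.mp hp).2).2⟩ : Fin n)))
    (fun a _ => ((τ.symm a.1).castSucc, (τ.symm a.2).castSucc)) ?_ ?_ ?_ ?_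
  · intro p hp
    have h := (Finset.mem_filter.mp hp).2
    obtain ⟨h1, h2⟩ := cross_ext1_bounds τ h
    rw [IsCross, ext1_apply_of_lt τ h1, ext1_apply_of_lt τ h2] at h
    set a := τ ⟨p.1, h1⟩ with ha
    set b := τ ⟨p.2, h2⟩ with hb
    simp only [Finset.mem_filter, Finset.mem_univ, true_and]
    have e1 : (τ⁻¹ a : ℕ) = (p.1 : ℕ) := by rw [ha]; simp
    have e2 : (τ⁻¹ b : ℕ) = (p.2 : ℕ) := by rw [hb]; simp
    rw [IsCross]
    simp only [Fin.lt_def, Fin.val_succ] at h ⊢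
    rw [e1, e2]
    omega
  · intro a ha
    have h := (Finset.mem_filter.mp ha).2
    simp only [Finset.mem_filter, Finset.mem_univ, true_and]
    rw [IsCross] at h ⊢
    rw [ext1_castSucc, ext1_castSucc, Equiv.apply_symm_apply, Equiv.apply_symm_apply]
    have e1 : (τ⁻¹ a.1 : ℕ) = ((τ.symm a.1 : Fin n) : ℕ) := rfl
    have e2 : (τ⁻¹ a.2 : ℕ) = ((τ.symm a.2 : Fin n) : ℕ) := rfl
    simp only [Fin.lt_def, Fin.val_succ, Fin.coe_castSucc] at h ⊢
    rw [e1, e2] at h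
    omega
  · intro p hp
    ext
    · simp
    · simp
  · intro a ha
    ext
    · simp [Fin.eta]
    · simp [Fin.eta]

lemma extFix_apply_of_lt {n : ℕ} (τ : Equiv.Perm (Fin n)) {x : Fin (n + 1)}
    (hx : (x : ℕ) < n) : extFix τ x = (τ ⟨x, hx⟩).castSucc := by
  obtain ⟨i, rfl⟩ : ∃ i : Fin n, x = i.castSucc := ⟨⟨x, hx⟩, by ext; simp⟩
  rw [extFix_castSucc]
  congr 1

lemma cross_extFix_bounds {n : ℕ} (τ : Equiv.Perm (Fin n)) {p q : Fin (n + 1)}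
    (h : IsCross (extFix τ) p q) : (p : ℕ) < n ∧ (q : ℕ) < n := by
  have hq : (q : ℕ) < n := by
    by_contra hq
    have : q = Fin.last n := by ext; have := q.isLt; simp; omega
    subst this
    rw [IsCross, extFix_last] at h
    have hb : ((extFix τ) p : ℕ) < n + 1 := ((extFix τ) p).isLt
    rcases h with ⟨h1, h2, h3⟩ | ⟨h1, h2, h3⟩
    · rw [Fin.lt_def] at h3; simp [Fin.val_last] at h2 h3; omega
    · rw [Fin.lt_def] at h1 h3; simp [Fin.val_last] at h1 h2 h3; omega
  have hpq : p < q := h.elim (fun h => h.1) (fun h => h.2.2)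
  exact ⟨lt_trans hpq (by exact hq), hq⟩

lemma cr_extFix {n : ℕ} (τ : Equiv.Perm (Fin n)) : cr (extFix τ) = cr τ := by
  unfold cr
  refine Finset.card_bij'
    (fun p hp => ((⟨p.1, (cross_extFix_bounds τ (Finset.mem_filter.mp hp).2).1⟩ : Fin n),
      (⟨p.2, (cross_extFix_bounds τ (Finset.mem_filter.mp hp).2).2⟩ : Fin n)))
    (fun a _ => ((a.1 : Fin n).castSucc, (a.2 : Fin n).castSucc)) ?_ ?_ ?_ ?_
  · intro p hp
    have h := (Finset.mem_filter.mp hp).2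
    obtain ⟨h1, h2⟩ := cross_extFix_bounds τ h
    rw [IsCross, extFix_apply_of_lt τ h1, extFix_apply_of_lt τ h2] at h
    simp only [Finset.mem_filter, Finset.mem_univ, true_and]
    rw [IsCross]
    simp only [Fin.lt_def, Fin.coe_castSucc] at h ⊢
    exact h
  · intro a ha
    have h := (Finset.mem_filter.mp ha).2
    simp only [Finset.mem_filter, Finset.mem_univ, true_and]
    rw [IsCross] at h ⊢
    rw [extFix_castSucc, extFix_castSucc]
    simp only [Fin.lt_def, Fin.coe_castSucc] at h ⊢
    exact h
  · intro p hp
    ext <;> simp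
  · intro a ha
    ext <;> simp

def ext2 {n : ℕ} (τ : Equiv.Perm (Fin (n + 1))) : Equiv.Perm (Fin (n + 2)) :=
  ext1 τ * Equiv.swap ((Fin.last n).castSucc) (Fin.last (n + 1))

lemma KneL {n : ℕ} : ((Fin.last n).castSucc : Fin (n + 2)) ≠ Fin.last (n + 1) := by
  rw [Fin.ne_iff_vne]; simp

lemma val_ext1_of_lt {n : ℕ} (τ : Equiv.Perm (Fin (n + 1))) {x : Fin (n + 2)}
    (h : (x : ℕ) < n + 1) : ((ext1 τ) x : ℕ) = (τ ⟨x, h⟩ : ℕ) + 1 := by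
  rw [ext1_apply_of_lt τ h]; simp

lemma val_ext2_of_lt {n : ℕ} (τ : Equiv.Perm (Fin (n + 1))) {x : Fin (n + 2)}
    (hx : (x : ℕ) < n) (h : (x : ℕ) < n + 1) :
    ((ext2 τ) x : ℕ) = (τ ⟨x, h⟩ : ℕ) + 1 := by
  rw [ext2, Equiv.Perm.mul_apply, Equiv.swap_apply_of_ne_of_ne, val_ext1_of_lt τ h]
  · rw [Fin.ne_iff_vne]; simp; omega
  · rw [Fin.ne_iff_vne]; simp; omega

lemma val_ext2_K {n : ℕ} (τ : Equiv.Perm (Fin (n + 1))) :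
    ((ext2 τ) ((Fin.last n).castSucc) : ℕ) = 0 := by
  rw [ext2, Equiv.Perm.mul_apply, Equiv.swap_apply_left, ext1_last]
  rfl

lemma val_ext2_L {n : ℕ} (τ : Equiv.Perm (Fin (n + 1))) :
    ((ext2 τ) (Fin.last (n + 1)) : ℕ) = (τ (Fin.last n) : ℕ) + 1 := by
  rw [ext2, Equiv.Perm.mul_apply, Equiv.swap_apply_right, ext1_castSucc]
  simp

lemma val_ext1_top {n : ℕ} (τ : Equiv.Perm (Fin (n + 1))) {x : Fin (n + 2)}
    (hx : (x : ℕ) = n) : ((ext1 τ) x : ℕ) = (τ (Fin.last n) : ℕ) + 1 := by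
  have : x = (Fin.last n).castSucc := by rw [Fin.ext_iff]; simpa using hx
  rw [this, ext1_castSucc]; simp

lemma val_ext1_last {n : ℕ} (τ : Equiv.Perm (Fin (n + 1))) {x : Fin (n + 2)}
    (hx : (x : ℕ) = n + 1) : ((ext1 τ) x : ℕ) = 0 := by
  have : x = Fin.last (n + 1) := by rw [Fin.ext_iff]; simpa using hx
  rw [this, ext1_last]; rfl

lemma isCross_iff_val {m : ℕ} (σ : Equiv.Perm (Fin m)) (p q : Fin m) :
    IsCross σ p q ↔
      ((p : ℕ) < q ∧ (q : ℕ) < (σ p : ℕ) ∧ (σ p : ℕ) < (σ q : ℕ)) ∨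
      ((σ p : ℕ) < (σ q : ℕ) ∧ (σ q : ℕ) ≤ (p : ℕ) ∧ (p : ℕ) < (q : ℕ)) := by
  rw [IsCross, Fin.lt_def, Fin.lt_def]

lemma cross_ext2_facts {n : ℕ} (τ : Equiv.Perm (Fin (n + 1))) {p q : Fin (n + 2)}
    (h : IsCross (ext2 τ) p q) : (p : ℕ) < (q : ℕ) ∧ (q : ℕ) ≠ n := by
  rw [isCross_iff_val] at h
  constructor
  · omega
  · intro hq
    have : q = (Fin.last n).castSucc := by rw [Fin.ext_iff]; simpa using hq
    rw [this, val_ext2_K] at h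
    omega

lemma cr_ext2_fix {n : ℕ} (τ : Equiv.Perm (Fin (n + 1))) (hτ : τ (Fin.last n) = Fin.last n) :
    cr (ext2 τ) = cr (ext1 τ) := by
  have hv : (τ (Fin.last n) : ℕ) = n := by rw [hτ]; simp
  unfold cr
  congr 1
  apply Finset.filter_congr
  intro p _
  constructor
  · intro h
    obtain ⟨hlt, hne⟩ := cross_ext2_facts τ h
    rw [isCross_iff_val] at h
    by_cases h2 : (p.2 : ℕ) = n + 1
    · exfalso
      have e2 : ((ext2 τ) p.2 : ℕ) = (τ (Fin.last n) : ℕ) + 1 := by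
        rw [show p.2 = Fin.last (n + 1) from by rw [Fin.ext_iff]; simpa using h2]
        exact val_ext2_L τ
      have hb := ((ext2 τ) p.1).isLt
      omega
    · have h2' : (p.2 : ℕ) < n := by have := p.2.isLt; omega
      have h1' : (p.1 : ℕ) < n := by omega
      have hb1 : (p.1 : ℕ) < n + 1 := by omega
      have hb2 : (p.2 : ℕ) < n + 1 := by omega
      rw [val_ext2_of_lt τ h1' hb1, val_ext2_of_lt τ h2' hb2] at h
      rw [isCross_iff_val, val_ext1_of_lt τ hb1, val_ext1_of_lt τ hb2]
      omega
  · intro h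
    obtain ⟨hb1, hb2⟩ := cross_ext1_bounds τ h
    rw [isCross_iff_val, val_ext1_of_lt τ hb1, val_ext1_of_lt τ hb2] at h
    have hlt : (p.1 : ℕ) < (p.2 : ℕ) := by omega
    by_cases h2 : (p.2 : ℕ) = n
    · exfalso
      have e2 : (τ (⟨p.2, hb2⟩ : Fin (n + 1)) : ℕ) = n := by
        rw [show (⟨p.2, hb2⟩ : Fin (n + 1)) = Fin.last n from by rw [Fin.ext_iff]; simpa using h2]
        exact hv
      have hbv := (τ (⟨p.1, hb1⟩ : Fin (n + 1))).isLt
      omega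
    · have h2' : (p.2 : ℕ) < n := by omega
      have h1' : (p.1 : ℕ) < n := by omega
      rw [isCross_iff_val, val_ext2_of_lt τ h1' hb1, val_ext2_of_lt τ h2' hb2]
      omega

lemma cr_ext2_nonfix {n : ℕ} (τ : Equiv.Perm (Fin (n + 1))) (hτ : τ (Fin.last n) ≠ Fin.last n) :
    cr (ext2 τ) = cr (ext1 τ) + 1 := by
  have hv : (τ (Fin.last n) : ℕ) < n := by
    have h1 := (τ (Fin.last n)).isLt
    have h2 : (τ (Fin.last n) : ℕ) ≠ n := by
      intro hc; exact hτ (by rw [Fin.ext_iff]; simpa using hc)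
    omega
  classical
  have hKv : (((Fin.last n).castSucc : Fin (n + 2)) : ℕ) = n := by simp
  have hLv : ((Fin.last (n + 1) : Fin (n + 2)) : ℕ) = n + 1 := rfl
  have hdummy : (Fin.last (n + 1), Fin.last (n + 1)) ∉
      Finset.univ.filter (fun p : Fin (n + 2) × Fin (n + 2) => IsCross (ext1 τ) p.1 p.2) := by
    simp only [Finset.mem_filter, Finset.mem_univ, true_and]
    rw [isCross_iff_val]
    omega
  unfold cr
  rw [← Finset.card_insert_of_notMem hdummy]
  refine Finset.card_bij'
    (fun p _ => if (p.1 : ℕ) = n then (Fin.last (n + 1), Fin.last (n + 1)) else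
      (p.1, if (p.2 : ℕ) = n + 1 then (Fin.last n).castSucc else p.2))
    (fun q _ => if (q.1 : ℕ) = n + 1 then ((Fin.last n).castSucc, Fin.last (n + 1)) else
      (q.1, if (q.2 : ℕ) = n then Fin.last (n + 1) else q.2)) ?_ ?_ ?_ ?_
  · -- hi : image in insert (L,L) s1
    intro p hp
    have h := (Finset.mem_filter.mp hp).2
    obtain ⟨hlt, hne⟩ := cross_ext2_facts τ h
    by_cases h1 : (p.1 : ℕ) = n
    · rw [if_pos h1]
      exact Finset.mem_insert_self _ _
    · rw [if_neg h1]
      have hq2 := p.2.isLt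
      have h1' : (p.1 : ℕ) < n := by omega
      have hb1 : (p.1 : ℕ) < n + 1 := by omega
      rw [isCross_iff_val, val_ext2_of_lt τ h1' hb1] at h
      apply Finset.mem_insert_of_mem
      simp only [Finset.mem_filter, Finset.mem_univ, true_and]
      by_cases h2 : (p.2 : ℕ) = n + 1
      · rw [if_pos h2]
        have e2 : ((ext2 τ) p.2 : ℕ) = (τ (Fin.last n) : ℕ) + 1 := by
          rw [show p.2 = Fin.last (n + 1) from by rw [Fin.ext_iff]; simpa using h2]
          exact val_ext2_L τ
        rw [e2] at h
        have eK : ((ext1 τ) ((Fin.last n).castSucc) : ℕ) = (τ (Fin.last n) : ℕ) + 1 :=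
          val_ext1_top τ hKv
        rw [isCross_iff_val, val_ext1_of_lt τ hb1, eK, hKv]
        omega
      · rw [if_neg h2]
        have h2' : (p.2 : ℕ) < n := by omega
        have hb2 : (p.2 : ℕ) < n + 1 := by omega
        rw [val_ext2_of_lt τ h2' hb2] at h
        rw [isCross_iff_val, val_ext1_of_lt τ hb1, val_ext1_of_lt τ hb2]
        omega
  · -- hj : image in s2
    intro q hq
    rcases Finset.mem_insert.mp hq with hq | hq
    · have h1 : (q.1 : ℕ) = n + 1 := by rw [hq]; rfl
      rw [if_pos h1]
      simp only [Finset.mem_filter, Finset.mem_univ, true_and]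
      rw [isCross_iff_val, val_ext2_K τ, val_ext2_L τ, hKv, hLv]
      omega
    · have h := (Finset.mem_filter.mp hq).2
      obtain ⟨hb1, hb2⟩ := cross_ext1_bounds τ h
      rw [isCross_iff_val, val_ext1_of_lt τ hb1] at h
      have hlt : (q.1 : ℕ) < (q.2 : ℕ) := by omega
      have h1ne : ¬ (q.1 : ℕ) = n + 1 := by omega
      rw [if_neg h1ne]
      simp only [Finset.mem_filter, Finset.mem_univ, true_and]
      have h1' : (q.1 : ℕ) < n := by omega
      by_cases h2 : (q.2 : ℕ) = n
      · rw [if_pos h2]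
        have e2 : ((ext1 τ) q.2 : ℕ) = (τ (Fin.last n) : ℕ) + 1 := val_ext1_top τ h2
        rw [e2] at h
        rw [isCross_iff_val, val_ext2_of_lt τ h1' hb1, val_ext2_L τ, hLv]
        omega
      · rw [if_neg h2]
        have h2' : (q.2 : ℕ) < n := by omega
        rw [val_ext1_of_lt τ hb2] at h
        rw [isCross_iff_val, val_ext2_of_lt τ h1' hb1, val_ext2_of_lt τ h2' hb2]
        omega
  · -- left inverse
    intro p hp
    have h := (Finset.mem_filter.mp hp).2
    obtain ⟨hlt, hne⟩ := cross_ext2_facts τ h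
    obtain ⟨a, b⟩ := p
    simp only at hlt hne
    have hb2 := b.isLt
    dsimp only
    by_cases h1 : (a : ℕ) = n
    · rw [if_pos h1]
      dsimp only
      rw [if_pos hLv]
      have h2 : (b : ℕ) = n + 1 := by omega
      simp only [Prod.mk.injEq, Fin.ext_iff, Fin.coe_castSucc, Fin.val_last, true_and, and_true]
      omega
    · rw [if_neg h1]
      by_cases h2 : (b : ℕ) = n + 1
      · rw [if_pos h2]
        dsimp only
        rw [if_neg (show ¬ (a : ℕ) = n + 1 by omega)]
        rw [if_pos hKv]
        simp only [Prod.mk.injEq, Fin.ext_iff, Fin.coe_castSucc, Fin.val_last, true_and, and_true]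
        omega
      · rw [if_neg h2]
        dsimp only
        rw [if_neg (show ¬ (a : ℕ) = n + 1 by omega)]
        rw [if_neg hne]
  · -- right inverse
    intro q hq
    rcases Finset.mem_insert.mp hq with hq | hq
    · subst hq
      dsimp only
      rw [if_pos hLv]
      dsimp only
      rw [if_pos hKv]
    · have h := (Finset.mem_filter.mp hq).2
      obtain ⟨hb1, hb2⟩ := cross_ext1_bounds τ h
      have hlt : (q.1 : ℕ) < (q.2 : ℕ) := by
        rw [isCross_iff_val] at h; omega
      obtain ⟨a, b⟩ := q
      simp only at hlt hb1 hb2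
      dsimp only
      rw [if_neg (show ¬ (a : ℕ) = n + 1 by omega)]
      by_cases h2 : (b : ℕ) = n
      · rw [if_pos h2]
        dsimp only
        rw [if_neg (show ¬ (a : ℕ) = n by omega)]
        rw [if_pos hLv]
        simp only [Prod.mk.injEq, Fin.ext_iff, Fin.coe_castSucc, Fin.val_last, true_and, and_true]
        omega
      · rw [if_neg h2]
        dsimp only
        rw [if_neg (show ¬ (a : ℕ) = n by omega)]
        rw [if_neg (show ¬ (b : ℕ) = n + 1 by omega)]

def res1 {n : ℕ} (σ : Equiv.Perm (Fin (n + 1))) (hσ : σ (Fin.last n) = 0) :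
    Equiv.Perm (Fin n) where
  toFun i := (σ i.castSucc).pred
    (fun hc => (Fin.castSucc_lt_last i).ne (σ.injective (hc.trans hσ.symm)))
  invFun j := (σ.symm j.succ).castPred
    (fun hc => (Fin.succ_ne_zero j) (by
      have := congrArg σ hc
      rw [Equiv.apply_symm_apply, hσ] at this
      exact this))
  left_inv i := by simp
  right_inv j := by simp

lemma ext1_res1 {n : ℕ} (σ : Equiv.Perm (Fin (n + 1))) (hσ : σ (Fin.last n) = 0) :
    ext1 (res1 σ hσ) = σ := by
  apply Equiv.ext
  intro i
  refine Fin.lastCases ?_ ?_ i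
  · rw [ext1_last, hσ]
  · intro i
    rw [ext1_castSucc]
    simp [res1]

lemma res1_ext1 {n : ℕ} (τ : Equiv.Perm (Fin n)) (h : ext1 τ (Fin.last n) = 0) :
    res1 (ext1 τ) h = τ := by
  apply Equiv.ext
  intro i
  simp [res1, ext1_castSucc]

def resFix {n : ℕ} (σ : Equiv.Perm (Fin (n + 1))) (hσ : σ (Fin.last n) = Fin.last n) :
    Equiv.Perm (Fin n) where
  toFun i := (σ i.castSucc).castPred
    (fun hc => (Fin.castSucc_lt_last i).ne (σ.injective (hc.trans hσ.symm)))
  invFun j := (σ.symm j.castSucc).castPred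
    (fun hc => (Fin.castSucc_lt_last j).ne (by
      have := congrArg σ hc
      rw [Equiv.apply_symm_apply, hσ] at this
      exact this))
  left_inv i := by simp
  right_inv j := by simp

lemma extFix_resFix {n : ℕ} (σ : Equiv.Perm (Fin (n + 1))) (hσ : σ (Fin.last n) = Fin.last n) :
    extFix (resFix σ hσ) = σ := by
  apply Equiv.ext
  intro i
  refine Fin.lastCases ?_ ?_ i
  · rw [extFix_last, hσ]
  · intro i
    rw [extFix_castSucc]
    simp [resFix]

lemma resFix_extFix {n : ℕ} (τ : Equiv.Perm (Fin n)) (h : extFix τ (Fin.last n) = Fin.last n) :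
    resFix (extFix τ) h = τ := by
  apply Equiv.ext
  intro i
  simp [resFix, extFix_castSucc]

lemma cr_ext2' {n : ℕ} (τ : Equiv.Perm (Fin (n + 1))) :
    cr (ext2 τ) = cr τ⁻¹ + (if τ (Fin.last n) = Fin.last n then 0 else 1) := by
  by_cases h : τ (Fin.last n) = Fin.last n
  · rw [if_pos h, cr_ext2_fix τ h, cr_ext1]
    omega
  · rw [if_neg h, cr_ext2_nonfix τ h, cr_ext1]

lemma ext2_K {n : ℕ} (τ : Equiv.Perm (Fin (n + 1))) :
    ext2 τ ((Fin.last n).castSucc) = 0 := by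
  apply Fin.ext
  rw [val_ext2_K]
  rfl

lemma ext2_res2 {n : ℕ} (σ : Equiv.Perm (Fin (n + 2)))
    (hσ : (σ * Equiv.swap ((Fin.last n).castSucc) (Fin.last (n + 1))) (Fin.last (n + 1)) = 0) :
    ext2 (res1 (σ * Equiv.swap ((Fin.last n).castSucc) (Fin.last (n + 1))) hσ) = σ := by
  rw [ext2, ext1_res1, mul_assoc, Equiv.swap_mul_self, mul_one]

lemma sum_part1 (n : ℕ) :
    (∑ σ ∈ Finset.univ.filter (fun σ : Equiv.Perm (Fin (n + 1)) => σ (Fin.last n) = 0),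
        (X : Polynomial ℤ) ^ cr σ) = ∑ τ : Equiv.Perm (Fin n), (X : Polynomial ℤ) ^ cr τ := by
  have step : (∑ τ : Equiv.Perm (Fin n), (X : Polynomial ℤ) ^ cr τ⁻¹)
      = ∑ τ : Equiv.Perm (Fin n), (X : Polynomial ℤ) ^ cr τ :=
    Fintype.sum_equiv (Equiv.inv (Equiv.Perm (Fin n))) _ _ (fun τ => rfl)
  rw [← step]
  refine Finset.sum_bij' (fun σ hσ => res1 σ (Finset.mem_filter.mp hσ).2)
    (fun τ _ => ext1 τ) (fun σ hσ => Finset.mem_univ _)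
    (fun τ _ => Finset.mem_filter.mpr ⟨Finset.mem_univ _, ext1_last τ⟩)
    (fun σ hσ => ext1_res1 σ _)
    (fun τ _ => res1_ext1 τ _) ?_
  intro σ hσ
  rw [← cr_ext1, ext1_res1]

lemma sum_fix (n : ℕ) :
    (∑ τ ∈ Finset.univ.filter
        (fun τ : Equiv.Perm (Fin (n + 1)) => τ (Fin.last n) = Fin.last n),
        (X : Polynomial ℤ) ^ cr τ) = ∑ ρ : Equiv.Perm (Fin n), (X : Polynomial ℤ) ^ cr ρ := by
  refine Finset.sum_bij' (fun σ hσ => resFix σ (Finset.mem_filter.mp hσ).2)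
    (fun ρ _ => extFix ρ) (fun σ hσ => Finset.mem_univ _)
    (fun ρ _ => Finset.mem_filter.mpr ⟨Finset.mem_univ _, extFix_last ρ⟩)
    (fun σ hσ => extFix_resFix σ _)
    (fun ρ _ => resFix_extFix ρ _) ?_
  intro σ hσ
  conv_rhs => rw [← cr_extFix, extFix_resFix]

lemma sum_part2 (n : ℕ) :
    (∑ σ ∈ Finset.univ.filter
        (fun σ : Equiv.Perm (Fin (n + 2)) => σ ((Fin.last n).castSucc) = 0),
        (X : Polynomial ℤ) ^ cr σ)
      = ∑ τ : Equiv.Perm (Fin (n + 1)),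
          (X : Polynomial ℤ) ^ (cr τ + if τ (Fin.last n) = Fin.last n then 0 else 1) := by
  have step : (∑ τ : Equiv.Perm (Fin (n + 1)),
        (X : Polynomial ℤ) ^ (cr τ⁻¹ + if τ (Fin.last n) = Fin.last n then 0 else 1))
      = ∑ τ : Equiv.Perm (Fin (n + 1)),
        (X : Polynomial ℤ) ^ (cr τ + if τ (Fin.last n) = Fin.last n then 0 else 1) := by
    refine Fintype.sum_equiv (Equiv.inv (Equiv.Perm (Fin (n + 1)))) _ _ (fun τ => ?_)
    simp only [Equiv.inv_apply]
    congr 2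
    by_cases h : τ (Fin.last n) = Fin.last n
    · rw [if_pos h, if_pos (by rw [Equiv.Perm.inv_eq_iff_eq]; exact h.symm)]
    · rw [if_neg h, if_neg (by rw [Equiv.Perm.inv_eq_iff_eq]; exact fun hc => h hc.symm)]
  rw [← step]
  refine Finset.sum_bij'
    (fun σ hσ => res1 (σ * Equiv.swap ((Fin.last n).castSucc) (Fin.last (n + 1)))
      (by rw [Equiv.Perm.mul_apply, Equiv.swap_apply_right]
          exact (Finset.mem_filter.mp hσ).2))
    (fun τ _ => ext2 τ) (fun σ hσ => Finset.mem_univ _)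
    (fun τ _ => Finset.mem_filter.mpr ⟨Finset.mem_univ _, ext2_K τ⟩)
    ?_ (fun τ _ => ?_) ?_
  · intro σ hσ
    exact ext2_res2 σ _
  · have e : ext2 τ * Equiv.swap ((Fin.last n).castSucc) (Fin.last (n + 1)) = ext1 τ := by
      rw [ext2, mul_assoc, Equiv.swap_mul_self, mul_one]
    simp only [e]
    exact res1_ext1 τ _
  · intro σ hσ
    rw [← cr_ext2', ext2_res2]

theorem stmt10 (n : ℕ) (hn : 1 ≤ n) (F : ℕ → Polynomial ℤ)
    (hF : ∀ m, F m = ∑ σ : Equiv.Perm (Fin m), (Polynomial.X : Polynomial ℤ) ^ cr σ) :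
    (∑ σ ∈ Finset.univ.filter (fun σ : Equiv.Perm (Fin (n + 1)) => σ (Fin.last n) = 0),
        (Polynomial.X : Polynomial ℤ) ^ cr σ) = F n ∧
    (∑ σ ∈ Finset.univ.filter
          (fun σ : Equiv.Perm (Fin (n + 1)) => (σ ⟨n - 1, by omega⟩ : ℕ) = 0),
        (Polynomial.X : Polynomial ℤ) ^ cr σ)
      = Polynomial.X * F n + (1 - Polynomial.X) * F (n - 1) := by
  obtain ⟨k, rfl⟩ : ∃ k, n = k + 1 := ⟨n - 1, by omega⟩
  constructor
  · rw [hF]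
    exact sum_part1 (k + 1)
  · have hidx : (⟨k + 1 - 1, by omega⟩ : Fin (k + 1 + 1)) = (Fin.last k).castSucc := by
      apply Fin.ext; simp
    have hfilter : (Finset.univ.filter
        (fun σ : Equiv.Perm (Fin (k + 1 + 1)) => (σ ⟨k + 1 - 1, by omega⟩ : ℕ) = 0))
        = Finset.univ.filter
          (fun σ : Equiv.Perm (Fin (k + 2)) => σ ((Fin.last k).castSucc) = 0) := by
      apply Finset.filter_congr
      intro σ _
      rw [hidx]
      constructor
      · intro h
        exact Fin.ext (by simpa using h)
      · intro h
        rw [h]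
        rfl
    rw [hfilter, sum_part2 k]
    rw [← Finset.sum_filter_add_sum_filter_not Finset.univ
      (fun τ : Equiv.Perm (Fin (k + 1)) => τ (Fin.last k) = Fin.last k)]
    have h1 : (∑ τ ∈ Finset.univ.filter
          (fun τ : Equiv.Perm (Fin (k + 1)) => τ (Fin.last k) = Fin.last k),
          (X : Polynomial ℤ) ^ (cr τ + if τ (Fin.last k) = Fin.last k then 0 else 1))
        = F k := by
      have hc : ∀ τ ∈ Finset.univ.filter
          (fun τ : Equiv.Perm (Fin (k + 1)) => τ (Fin.last k) = Fin.last k),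
          (X : Polynomial ℤ) ^ (cr τ + if τ (Fin.last k) = Fin.last k then 0 else 1)
            = (X : Polynomial ℤ) ^ cr τ := by
        intro τ hτ
        rw [if_pos (Finset.mem_filter.mp hτ).2, Nat.add_zero]
      rw [Finset.sum_congr rfl hc, sum_fix k, hF k]
    have h2 : (∑ τ ∈ Finset.univ.filter
          (fun τ : Equiv.Perm (Fin (k + 1)) => ¬ τ (Fin.last k) = Fin.last k),
          (X : Polynomial ℤ) ^ (cr τ + if τ (Fin.last k) = Fin.last k then 0 else 1))
        = X * ∑ τ ∈ Finset.univ.filter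
          (fun τ : Equiv.Perm (Fin (k + 1)) => ¬ τ (Fin.last k) = Fin.last k),
          (X : Polynomial ℤ) ^ cr τ := by
      rw [Finset.mul_sum]
      apply Finset.sum_congr rfl
      intro τ hτ
      rw [if_neg (Finset.mem_filter.mp hτ).2, pow_succ]
      ring
    have h3 : ((∑ τ ∈ Finset.univ.filter
          (fun τ : Equiv.Perm (Fin (k + 1)) => τ (Fin.last k) = Fin.last k),
          (X : Polynomial ℤ) ^ cr τ) +
        ∑ τ ∈ Finset.univ.filter
          (fun τ : Equiv.Perm (Fin (k + 1)) => ¬ τ (Fin.last k) = Fin.last k),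
          (X : Polynomial ℤ) ^ cr τ) = F (k + 1) := by
      rw [Finset.sum_filter_add_sum_filter_not, hF]
    have h4 : (∑ τ ∈ Finset.univ.filter
          (fun τ : Equiv.Perm (Fin (k + 1)) => τ (Fin.last k) = Fin.last k),
          (X : Polynomial ℤ) ^ cr τ) = F k := by
      rw [sum_fix k, hF k]
    rw [h4] at h3
    rw [h1, h2]
    have hk : k + 1 - 1 = k := rfl
    rw [hk]
    linear_combination X * h3
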